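/- (Schmidt/Sprindžuk quasi-independence lemma) Let $(\mathcal{X},\mu)$ be a probability space and $\{f_m\}_{m\in\mathbb{N}}$ measurable functions with values in $[0,1]$. Suppose there is a constant $C>0$ such that for all $m\le n$, $\int_{\mathcal{X}}\big(\sum_{i=m}^n f_i(x)-\sum_{i=m}^n\mu(f_i)\big)^2 d\mu(x)\le C\sum_{i=m}^n\mu(f_i)$, where $\mu(f_i)=\int f_i\,d\mu$. If $E_m=\sum_{j=1}^m\mu(f_j)\to\infty$, then for almost every $x$, $\lim_{m\to\infty}\frac{\sum_{j=1}^m f_j(x)}{E_m}=1$. -/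

import Mathlib

open MeasureTheory Filter

private lemma ratio_tendsto :
    Tendsto (fun k : ℕ => (((k : ℝ) + 2) ^ 2 + 1) / (((k : ℝ) + 1) ^ 2)) atTop (nhds 1) := by
  have h : Tendsto (fun n : ℕ => 1 / ((n : ℝ) + 1)) atTop (nhds 0) :=
    tendsto_one_div_add_atTop_nhds_zero_nat
  have h2 : Tendsto (fun k : ℕ => 1 + 2 * (1 / ((k : ℝ) + 1)) + 2 * (1 / ((k : ℝ) + 1)) ^ 2)
      atTop (nhds (1 + 2 * 0 + 2 * 0 ^ 2)) :=
    (tendsto_const_nhds.add (h.const_mul 2)).add ((h.pow 2).const_mul 2)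
  norm_num at h2
  convert h2 using 2 with k
  have hk : ((k : ℝ) + 1) ≠ 0 := by positivity
  field_simp
  ring

private lemma sandwich (E T : ℕ → ℝ) (mk : ℕ → ℕ)
    (hEmono : Monotone E) (hTmono : Monotone T) (hT0 : ∀ n, 0 ≤ T n)
    (hlow : ∀ k : ℕ, ((k : ℝ) + 1) ^ 2 ≤ E (mk k))
    (hhigh : ∀ k, E (mk k) ≤ ((k : ℝ) + 1) ^ 2 + 1)
    (hmk_ge : ∀ k, (k + 1) ^ 2 ≤ mk k)
    (hr : Tendsto (fun k => T (mk k) / E (mk k)) atTop (nhds 1)) :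
    Tendsto (fun m => T m / E m) atTop (nhds 1) := by
  classical
  set r : ℕ → ℝ := fun k => T (mk k) / E (mk k) with hrdef
  set K : ℕ → ℕ := fun m => Nat.findGreatest (fun k => mk k ≤ m) m with hKdef
  have hEpos : ∀ k, 0 < E (mk k) := fun k => lt_of_lt_of_le (by positivity) (hlow k)
  have hr0 : ∀ k, 0 ≤ r k := fun k => div_nonneg (hT0 _) (hEpos k).le
  have hKspec : ∀ m, mk 0 ≤ m → mk (K m) ≤ m := fun m hm =>
    Nat.findGreatest_spec (P := fun k => mk k ≤ m) (Nat.zero_le m) hm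
  have hKsucc : ∀ m, m < mk (K m + 1) := by
    intro m
    by_cases h : K m + 1 ≤ m
    · by_contra hcon
      push_neg at hcon
      exact Nat.findGreatest_is_greatest (Nat.lt_succ_self _) h hcon
    · push_neg at h
      have hm : m ≤ K m := Nat.lt_succ_iff.mp h
      calc m < (K m + 2) ^ 2 := by nlinarith
        _ ≤ mk (K m + 1) := hmk_ge (K m + 1)
  have hKtend : Tendsto K atTop atTop := by
    refine tendsto_atTop_atTop.2 fun b => ⟨mk b, fun a ha => ?_⟩
    have hb : b ≤ mk b := le_trans (by nlinarith) (hmk_ge b)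
    exact Nat.le_findGreatest (le_trans hb ha) ha
  -- upper and lower bounding sequences
  set u : ℕ → ℝ := fun k => r (k + 1) * ((((k : ℝ) + 2) ^ 2 + 1) / (((k : ℝ) + 1) ^ 2))
    with hudef
  set l : ℕ → ℝ := fun k => r k * ((((k : ℝ) + 1) ^ 2) / ((((k : ℝ) + 2) ^ 2) + 1))
    with hldef
  have hu : Tendsto u atTop (nhds 1) := by
    have := (hr.comp (tendsto_add_atTop_nat 1)).mul ratio_tendsto
    norm_num at this
    exact this
  have hl : Tendsto l atTop (nhds 1) := by
    have hinv : Tendsto (fun k : ℕ => ((((k : ℝ) + 2) ^ 2 + 1) / (((k : ℝ) + 1) ^ 2))⁻¹)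
        atTop (nhds 1⁻¹) := ratio_tendsto.inv₀ one_ne_zero
    have h2 := hr.mul hinv
    norm_num at h2
    rw [hldef]
    exact h2
  refine tendsto_of_tendsto_of_tendsto_of_le_of_le' (hl.comp hKtend) (hu.comp hKtend) ?_ ?_
  · -- lower bound eventually
    filter_upwards [eventually_ge_atTop (mk 0)] with m hm
    set k := K m with hk
    have h1 : mk k ≤ m := hKspec m hm
    have h2 : m < mk (k + 1) := hKsucc m
    have hEm : 0 < E m := lt_of_lt_of_le (hEpos k) (hEmono h1)
    have hc1 : ((k : ℝ) + 1) ^ 2 / (((k : ℝ) + 2) ^ 2 + 1) ≤ E (mk k) / E (mk (k + 1)) := by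
      apply div_le_div₀ (hEpos k).le (hlow k) (hEpos (k + 1))
      have := hhigh (k + 1)
      push_cast at this ⊢
      linarith
    have hc2 : r k * (E (mk k) / E (mk (k + 1))) = T (mk k) / E (mk (k + 1)) := by
      rw [hrdef]
      field_simp [(hEpos k).ne', (hEpos (k + 1)).ne']
    calc l k ≤ r k * (E (mk k) / E (mk (k + 1))) :=
          mul_le_mul_of_nonneg_left hc1 (hr0 k)
      _ = T (mk k) / E (mk (k + 1)) := hc2
      _ ≤ T m / E m :=
          div_le_div₀ (hT0 m) (hTmono h1) hEm (hEmono h2.le)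
  · -- upper bound eventually
    filter_upwards [eventually_ge_atTop (mk 0)] with m hm
    set k := K m with hk
    have h1 : mk k ≤ m := hKspec m hm
    have h2 : m < mk (k + 1) := hKsucc m
    have hEm : 0 < E m := lt_of_lt_of_le (hEpos k) (hEmono h1)
    have hc2 : r (k + 1) * (E (mk (k + 1)) / E (mk k)) = T (mk (k + 1)) / E (mk k) := by
      rw [hrdef]
      field_simp [(hEpos k).ne', (hEpos (k + 1)).ne']
    have hc1 : E (mk (k + 1)) / E (mk k) ≤ (((k : ℝ) + 2) ^ 2 + 1) / (((k : ℝ) + 1) ^ 2) := by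
      apply div_le_div₀ (by positivity) ?_ (by positivity) (hlow k)
      have := hhigh (k + 1)
      push_cast at this ⊢
      linarith
    calc T m / E m ≤ T (mk (k + 1)) / E (mk k) :=
          div_le_div₀ (hT0 _) (hTmono h2.le) (hEpos k) (hEmono h1)
      _ = r (k + 1) * (E (mk (k + 1)) / E (mk k)) := hc2.symm
      _ ≤ u k := mul_le_mul_of_nonneg_left hc1 (hr0 (k + 1))

theorem stmt4 {X : Type*} [MeasurableSpace X] (μ : Measure X) [IsProbabilityMeasure μ]
    (f : ℕ → X → ℝ) (hmeas : ∀ m, Measurable (f m))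
    (h01 : ∀ m x, f m x ∈ Set.Icc (0 : ℝ) 1)
    (C : ℝ) (hC : 0 < C)
    (hvar : ∀ m n : ℕ, m ≤ n →
      ∫ x, (∑ i ∈ Finset.Icc m n, f i x - ∑ i ∈ Finset.Icc m n, ∫ y, f i y ∂μ) ^ 2 ∂μ
        ≤ C * ∑ i ∈ Finset.Icc m n, ∫ y, f i y ∂μ)
    (hE : Tendsto (fun m : ℕ => ∑ j ∈ Finset.Icc 1 m, ∫ y, f j y ∂μ) atTop atTop) :
    ∀ᵐ x ∂μ, Tendsto
      (fun m : ℕ => (∑ j ∈ Finset.Icc 1 m, f j x) / (∑ j ∈ Finset.Icc 1 m, ∫ y, f j y ∂μ))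
      atTop (nhds 1) := by
  classical
  set g : ℕ → ℝ := fun j => ∫ y, f j y ∂μ with hgdef
  set E : ℕ → ℝ := fun n => ∑ j ∈ Finset.Icc 1 n, g j with hEdef
  set S : ℕ → X → ℝ := fun n x => ∑ j ∈ Finset.Icc 1 n, f j x with hSdef
  have hint : ∀ j, Integrable (f j) μ := fun j =>
    (integrable_const (1 : ℝ)).mono' (hmeas j).aestronglyMeasurable
      (Eventually.of_forall fun x => by
        rw [Real.norm_eq_abs, abs_of_nonneg (h01 j x).1]; exact (h01 j x).2)
  have hg0 : ∀ j, 0 ≤ g j := fun j => integral_nonneg fun x => (h01 j x).1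
  have hg1 : ∀ j, g j ≤ 1 := by
    intro j
    have := integral_mono (hint j) (integrable_const 1) (fun x => (h01 j x).2)
    simpa using this
  have hSmeas : ∀ n, Measurable (S n) := fun n =>
    Finset.measurable_sum _ fun j _ => hmeas j
  have hS0 : ∀ n x, 0 ≤ S n x := fun n x =>
    Finset.sum_nonneg fun j _ => (h01 j x).1
  have hSle : ∀ n x, S n x ≤ n := by
    intro n x
    calc S n x ≤ ∑ j ∈ Finset.Icc 1 n, (1 : ℝ) :=
          Finset.sum_le_sum fun j _ => (h01 j x).2
      _ = n := by simp [Nat.card_Icc]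
  have hSmono : ∀ x, Monotone fun n => S n x := by
    intro x
    intro a b hab
    exact Finset.sum_le_sum_of_subset_of_nonneg
      (Finset.Icc_subset_Icc_right hab) (fun j _ _ => (h01 j x).1)
  have hEmono : Monotone E := by
    intro a b hab
    exact Finset.sum_le_sum_of_subset_of_nonneg
      (Finset.Icc_subset_Icc_right hab) (fun j _ _ => hg0 j)
  have hE0 : ∀ n, 0 ≤ E n := fun n => Finset.sum_nonneg fun j _ => hg0 j
  have hEn : ∀ n, E n ≤ n := by
    intro n
    calc E n ≤ ∑ j ∈ Finset.Icc 1 n, (1 : ℝ) := Finset.sum_le_sum fun j _ => hg1 j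
      _ = n := by simp [Nat.card_Icc]
  -- subsequence
  have hex : ∀ k : ℕ, ∃ n, ((k : ℝ) + 1) ^ 2 ≤ E n := fun k =>
    (hE.eventually_ge_atTop (((k : ℝ) + 1) ^ 2)).exists
  set mk : ℕ → ℕ := fun k => Nat.find (hex k) with hmkdef
  have hlow : ∀ k : ℕ, ((k : ℝ) + 1) ^ 2 ≤ E (mk k) := fun k => Nat.find_spec (hex k)
  have hmkpos : ∀ k, 1 ≤ mk k := by
    intro k
    rcases Nat.eq_zero_or_pos (mk k) with h | h
    · exfalso
      have h1 := hlow k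
      rw [h] at h1
      have h2 : E 0 = 0 := by simp [hEdef]
      rw [h2] at h1
      have h3 : (0 : ℝ) < ((k : ℝ) + 1) ^ 2 := by positivity
      linarith
    · exact h
  have hhigh : ∀ k, E (mk k) ≤ ((k : ℝ) + 1) ^ 2 + 1 := by
    intro k
    obtain ⟨n, hn⟩ : ∃ n, mk k = n + 1 := Nat.exists_eq_succ_of_ne_zero (by have := hmkpos k; omega)
    have hmin : ¬ ((k : ℝ) + 1) ^ 2 ≤ E n := by
      have hlt : n < Nat.find (hex k) := by
        rw [show Nat.find (hex k) = mk k from rfl]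
        omega
      exact Nat.find_min (hex k) hlt
    push_neg at hmin
    have hstep : E (n + 1) = E n + g (n + 1) := by
      rw [hEdef]
      exact Finset.sum_Icc_succ_top (Nat.le_add_left 1 n) g
    rw [hn, hstep]
    have := hg1 (n + 1)
    linarith
  have hmk_ge : ∀ k, (k + 1) ^ 2 ≤ mk k := by
    intro k
    have h1 : ((k : ℝ) + 1) ^ 2 ≤ (mk k : ℝ) := le_trans (hlow k) (hEn (mk k))
    have : (((k + 1) ^ 2 : ℕ) : ℝ) ≤ (mk k : ℝ) := by push_cast; linarith
    exact_mod_cast this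
  have hEpos : ∀ k, 0 < E (mk k) := fun k => lt_of_lt_of_le (by positivity) (hlow k)
  -- variance bound along subsequence
  have hVint : ∀ n, Integrable (fun x => (S n x - E n) ^ 2) μ := by
    intro n
    refine (integrable_const (((n : ℝ) + |E n|) ^ 2)).mono'
      (((hSmeas n).sub measurable_const).pow_const 2).aestronglyMeasurable
      (Eventually.of_forall fun x => ?_)
    rw [Real.norm_eq_abs, abs_of_nonneg (sq_nonneg _)]
    have h1 : |S n x - E n| ≤ (n : ℝ) + |E n| := by
      have := abs_sub_abs_le_abs_sub (S n x) (E n)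
      have h2 : |S n x| ≤ (n : ℝ) := by
        rw [abs_of_nonneg (hS0 n x)]; exact hSle n x
      calc |S n x - E n| ≤ |S n x| + |E n| := abs_sub _ _
        _ ≤ (n : ℝ) + |E n| := by linarith
    calc (S n x - E n) ^ 2 = |S n x - E n| ^ 2 := (sq_abs _).symm
      _ ≤ ((n : ℝ) + |E n|) ^ 2 := by
          apply pow_le_pow_left₀ (abs_nonneg _) h1
  have hratio_int : ∀ n, Integrable (fun x => ((S n x - E n) / E n) ^ 2) μ := by
    intro n
    have : (fun x => ((S n x - E n) / E n) ^ 2)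
        = fun x => (S n x - E n) ^ 2 * ((E n)⁻¹) ^ 2 := by
      funext x; rw [div_pow]; rw [div_eq_mul_inv, inv_pow]
    rw [this]
    exact (hVint n).mul_const _
  have hratio_bound : ∀ k, ∫ x, ((S (mk k) x - E (mk k)) / E (mk k)) ^ 2 ∂μ
      ≤ C * (((k : ℝ) + 1) ^ 2)⁻¹ := by
    intro k
    have heq : (fun x => ((S (mk k) x - E (mk k)) / E (mk k)) ^ 2)
        = fun x => (S (mk k) x - E (mk k)) ^ 2 * ((E (mk k))⁻¹) ^ 2 := by
      funext x; rw [div_pow]; rw [div_eq_mul_inv, inv_pow]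
    rw [heq, integral_mul_const]
    have hv : ∫ x, (S (mk k) x - E (mk k)) ^ 2 ∂μ ≤ C * E (mk k) :=
      hvar 1 (mk k) (hmkpos k)
    have hEk := hEpos k
    calc (∫ x, (S (mk k) x - E (mk k)) ^ 2 ∂μ) * ((E (mk k))⁻¹) ^ 2
        ≤ (C * E (mk k)) * ((E (mk k))⁻¹) ^ 2 := by
          apply mul_le_mul_of_nonneg_right hv (by positivity)
      _ = C * (E (mk k))⁻¹ := by field_simp
      _ ≤ C * (((k : ℝ) + 1) ^ 2)⁻¹ := by
          apply mul_le_mul_of_nonneg_left _ hC.le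
          exact inv_anti₀ (by positivity) (hlow k)
  -- almost-everywhere convergence along subsequence
  set q : ℕ → X → ENNReal := fun k x =>
    ENNReal.ofReal (((S (mk k) x - E (mk k)) / E (mk k)) ^ 2) with hqdef
  have hqmeas : ∀ k, Measurable (q k) := fun k =>
    ENNReal.measurable_ofReal.comp
      ((((hSmeas (mk k)).sub measurable_const).div_const _).pow_const 2)
  have hsummable : Summable (fun k : ℕ => C * (((k : ℝ) + 1) ^ 2)⁻¹) := by
    have h1 : Summable (fun k : ℕ => ((((k : ℕ) + 1) : ℝ) ^ 2)⁻¹) := by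
      have := (summable_nat_add_iff 1).2 (Real.summable_one_div_nat_pow.2 (le_refl 2))
      simpa [one_div] using this
    simpa using h1.mul_left C
  have htsum_ne_top : ∑' k : ℕ, ∫⁻ x, q k x ∂μ ≠ ⊤ := by
    have hle : ∀ k, ∫⁻ x, q k x ∂μ ≤ ENNReal.ofReal (C * (((k : ℝ) + 1) ^ 2)⁻¹) := by
      intro k
      rw [hqdef]
      rw [← ofReal_integral_eq_lintegral_ofReal (hratio_int (mk k))
        (Eventually.of_forall fun x => sq_nonneg _)]
      exact ENNReal.ofReal_le_ofReal (hratio_bound k)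
    have h2 : ∑' k : ℕ, ∫⁻ x, q k x ∂μ
        ≤ ∑' k : ℕ, ENNReal.ofReal (C * (((k : ℝ) + 1) ^ 2)⁻¹) := ENNReal.tsum_le_tsum hle
    have h3 : ∑' k : ℕ, ENNReal.ofReal (C * (((k : ℝ) + 1) ^ 2)⁻¹)
        = ENNReal.ofReal (∑' k : ℕ, C * (((k : ℝ) + 1) ^ 2)⁻¹) :=
      (ENNReal.ofReal_tsum_of_nonneg (fun k => by positivity) hsummable).symm
    rw [h3] at h2
    exact ne_top_of_le_ne_top ENNReal.ofReal_ne_top h2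
  have hae : ∀ᵐ x ∂μ, ∑' k : ℕ, q k x < ⊤ := by
    refine ae_lt_top (Measurable.ennreal_tsum hqmeas) ?_
    rw [lintegral_tsum fun k => (hqmeas k).aemeasurable]
    exact htsum_ne_top
  filter_upwards [hae] with x hx
  -- convergence along subsequence at x
  have hq0 : Tendsto (fun k => q k x) atTop (nhds 0) :=
    ENNReal.tendsto_atTop_zero_of_tsum_ne_top hx.ne
  have hreal : Tendsto (fun k => ((S (mk k) x - E (mk k)) / E (mk k)) ^ 2) atTop (nhds 0) := by
    have h1 : Tendsto (fun k => (q k x).toReal) atTop (nhds (0 : ENNReal).toReal) :=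
      (ENNReal.tendsto_toReal (by simp)).comp hq0
    simp only [ENNReal.toReal_zero] at h1
    have h2 : (fun k => (q k x).toReal)
        = fun k => ((S (mk k) x - E (mk k)) / E (mk k)) ^ 2 := by
      funext k
      rw [hqdef, ENNReal.toReal_ofReal (sq_nonneg _)]
    rwa [h2] at h1
  have habs : Tendsto (fun k => (S (mk k) x - E (mk k)) / E (mk k)) atTop (nhds 0) := by
    rw [tendsto_zero_iff_abs_tendsto_zero]
    have h1 : Tendsto (fun k => Real.sqrt (((S (mk k) x - E (mk k)) / E (mk k)) ^ 2))
        atTop (nhds (Real.sqrt 0)) :=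
      (Real.continuous_sqrt.continuousAt).tendsto.comp hreal
    rw [Real.sqrt_zero] at h1
    have h2 : (fun k => Real.sqrt (((S (mk k) x - E (mk k)) / E (mk k)) ^ 2))
        = fun k => |(S (mk k) x - E (mk k)) / E (mk k)| := by
      funext k; rw [Real.sqrt_sq_eq_abs]
    rwa [h2] at h1
  have hr : Tendsto (fun k => S (mk k) x / E (mk k)) atTop (nhds 1) := by
    have h1 : Tendsto (fun k => (S (mk k) x - E (mk k)) / E (mk k) + 1) atTop (nhds (0 + 1)) :=
      habs.add tendsto_const_nhds
    norm_num at h1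
    have h2 : (fun k => (S (mk k) x - E (mk k)) / E (mk k) + 1)
        = fun k => S (mk k) x / E (mk k) := by
      funext k
      rw [sub_div, div_self (hEpos k).ne']
      ring
    rwa [h2] at h1
  exact sandwich E (fun n => S n x) mk hEmono (hSmono x) (fun n => hS0 n x)
    hlow hhigh hmk_ge hr
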